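/- Let $n = n_x + n_u$, let $P \in \mathbb{R}^{n \times n}$ be symmetric positive definite with smallest eigenvalue $\lambda_{\min}(P)$ and largest eigenvalue $\lambda_{\max}(P)$, let $J = [\, I_{n_x} \;\; 0_{n_x \times n_u}\,] \in \mathbb{R}^{n_x \times n}$, and let $A_{\rm cl} \in \mathbb{R}^{n \times n}$. Let $\alpha > 0$, $\zeta > 0$, $k_b \ge 0$, and suppose the Loewner inequality $\mathrm{Sym}(P A_{\rm cl}) + \zeta^{-1} P J^\top J P \preceq -\alpha I_n$ holds. Let $z : \mathbb{R} \to \mathbb{R}^n$ be differentiable with $z'(t) = A_{\rm cl}\, z(t) + J^\top g(t)$ for all $t \ge 0$, where $g : \mathbb{R} \to \mathbb{R}^{n_x}$ satisfies $\|g(t)\| \le k_b$ for all $t \ge 0$. Then $\limsup_{t \to \infty} \|z(t)\| \le k_b \sqrt{\dfrac{\zeta\, \lambda_{\max}(P)}{\alpha\, \lambda_{\min}(P)}}$. -/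

import Mathlib

open Matrix

set_option linter.unusedSectionVars false
section Aux
variable {n m : Type*} [Fintype n] [Fintype m] [DecidableEq n]

lemma my_vecMul_eq (M : Matrix m n ℝ) (v : m → ℝ) : v ᵥ* M = Mᵀ *ᵥ v := by
  rw [← vecMul_transpose, transpose_transpose]

lemma my_quad_repr {A : Matrix n n ℝ} (hA : A.IsHermitian) (x : n → ℝ) :
    x ⬝ᵥ A.mulVec x = ∑ i, hA.eigenvalues i *
      ((star (hA.eigenvectorUnitary : Matrix n n ℝ)).mulVec x i)^2 := by
  set U := (hA.eigenvectorUnitary : Matrix n n ℝ) with hU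
  have hstar : star U = Uᵀ := by
    rw [Matrix.star_eq_conjTranspose, conjTranspose_eq_transpose_of_trivial]
  conv_lhs => rw [hA.spectral_theorem, Unitary.conjStarAlgAut_apply]
  rw [← mulVec_mulVec, ← mulVec_mulVec, dotProduct_mulVec, ← hU, my_vecMul_eq, ← hstar]
  simp [dotProduct, mulVec_diagonal, Function.comp, pow_two]
  exact Finset.sum_congr rfl fun i _ => by ring

lemma my_norm_repr {A : Matrix n n ℝ} (hA : A.IsHermitian) (x : n → ℝ) :
    x ⬝ᵥ x = ∑ i, ((star (hA.eigenvectorUnitary : Matrix n n ℝ)).mulVec x i)^2 := by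
  set U := (hA.eigenvectorUnitary : Matrix n n ℝ)
  have h1 : U * star U = 1 := (Matrix.mem_unitaryGroup_iff).mp hA.eigenvectorUnitary.2
  calc x ⬝ᵥ x = x ⬝ᵥ ((U * star U) *ᵥ x) := by rw [h1]; simp
    _ = ((star U) *ᵥ x) ⬝ᵥ ((star U) *ᵥ x) := by
        have hstar : star U = Uᵀ := by
          rw [Matrix.star_eq_conjTranspose, conjTranspose_eq_transpose_of_trivial]
        rw [← mulVec_mulVec, dotProduct_mulVec, my_vecMul_eq, ← hstar]
    _ = _ := by simp [dotProduct, pow_two]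

lemma my_quad_lb {A : Matrix n n ℝ} (hA : A.IsHermitian)
    {c : ℝ} (hc : ∀ i, c ≤ hA.eigenvalues i) (x : n → ℝ) :
    c * (x ⬝ᵥ x) ≤ x ⬝ᵥ A.mulVec x := by
  rw [my_quad_repr hA, my_norm_repr hA, Finset.mul_sum]
  exact Finset.sum_le_sum fun i _ => mul_le_mul_of_nonneg_right (hc i) (sq_nonneg _)

lemma my_quad_ub {A : Matrix n n ℝ} (hA : A.IsHermitian)
    {c : ℝ} (hc : ∀ i, hA.eigenvalues i ≤ c) (x : n → ℝ) :
    x ⬝ᵥ A.mulVec x ≤ c * (x ⬝ᵥ x) := by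
  rw [my_quad_repr hA, my_norm_repr hA, Finset.mul_sum]
  exact Finset.sum_le_sum fun i _ => mul_le_mul_of_nonneg_right (hc i) (sq_nonneg _)

lemma my_hasDerivAt_quad (P : Matrix n n ℝ) (z : ℝ → EuclideanSpace ℝ n)
    (z' : EuclideanSpace ℝ n) (t : ℝ) (h : HasDerivAt z z' t) :
    HasDerivAt (fun s => (z s : n → ℝ) ⬝ᵥ P.mulVec (z s))
      ((z t : n → ℝ) ⬝ᵥ P.mulVec z' + (z' : n → ℝ) ⬝ᵥ P.mulVec (z t)) t := by
  have hP : ∀ x : EuclideanSpace ℝ n,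
      Matrix.toEuclideanCLM (𝕜 := ℝ) P x = WithLp.toLp 2 (P.mulVec x : n → ℝ) :=
    fun x => congrArg (WithLp.toLp 2) (Matrix.ofLp_toEuclideanCLM P x)
  have h2 : HasDerivAt (fun s => Matrix.toEuclideanCLM (𝕜 := ℝ) P (z s))
      (Matrix.toEuclideanCLM (𝕜 := ℝ) P z') t :=
    (Matrix.toEuclideanCLM (𝕜 := ℝ) P).hasFDerivAt.comp_hasDerivAt t h
  have h3 := h.inner ℝ h2
  have key : ∀ (x y : EuclideanSpace ℝ n), @inner ℝ _ _ x y = (x : n → ℝ) ⬝ᵥ (y : n → ℝ) := by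
    intro x y; simp [PiLp.inner_apply, dotProduct, mul_comm]
  simp only [hP, key, WithLp.ofLp_toLp] at h3
  exact h3

lemma my_cauchy (w q : m → ℝ) {c : ℝ} (hc : 0 < c) :
    2 * (w ⬝ᵥ q) ≤ c⁻¹ * (w ⬝ᵥ w) + c * (q ⬝ᵥ q) := by
  have h0 : 0 ≤ (w - c • q) ⬝ᵥ (w - c • q) :=
    Finset.sum_nonneg fun i _ => mul_self_nonneg _
  simp only [sub_dotProduct, dotProduct_sub, smul_dotProduct, dotProduct_smul,
    smul_eq_mul] at h0
  rw [dotProduct_comm q w] at h0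
  have key : c⁻¹ * (w ⬝ᵥ w) + c * (q ⬝ᵥ q) - 2 * (w ⬝ᵥ q)
      = c⁻¹ * (w ⬝ᵥ w - c * (w ⬝ᵥ q) - c * (w ⬝ᵥ q - c * (q ⬝ᵥ q))) := by
    field_simp
    ring
  linarith [mul_nonneg (inv_nonneg.2 hc.le) h0]
end Aux

/-- Analytic core of the continuous-time robust regulation result. -/
theorem continuous_time_practical_stability
    {nx nu : ℕ}
    (P : Matrix (Fin nx ⊕ Fin nu) (Fin nx ⊕ Fin nu) ℝ) (hP : P.PosDef)
    (lmin lmax : ℝ)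
    (hlmin : lmin = ⨅ i, hP.1.eigenvalues i)
    (hlmax : lmax = ⨆ i, hP.1.eigenvalues i)
    (J : Matrix (Fin nx) (Fin nx ⊕ Fin nu) ℝ)
    (hJ : J = Matrix.fromCols 1 0)
    (Acl : Matrix (Fin nx ⊕ Fin nu) (Fin nx ⊕ Fin nu) ℝ)
    (α ζ kb : ℝ) (hα : 0 < α) (hζ : 0 < ζ) (hkb : 0 ≤ kb)
    (hLoewner : ((-α) • (1 : Matrix (Fin nx ⊕ Fin nu) (Fin nx ⊕ Fin nu) ℝ)
        - (P * Acl + (P * Acl)ᵀ + ζ⁻¹ • (P * Jᵀ * J * P))).PosSemidef)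
    (z : ℝ → EuclideanSpace ℝ (Fin nx ⊕ Fin nu))
    (g : ℝ → EuclideanSpace ℝ (Fin nx))
    (hg : ∀ t, 0 ≤ t → ‖g t‖ ≤ kb)
    (hz : ∀ t, 0 ≤ t → HasDerivAt z
      (WithLp.toLp 2 (Acl.mulVec (z t) + Jᵀ.mulVec (g t) :
          (Fin nx ⊕ Fin nu) → ℝ) : EuclideanSpace ℝ (Fin nx ⊕ Fin nu)) t) :
    Filter.limsup (fun t => ‖z t‖) Filter.atTop
      ≤ kb * Real.sqrt (ζ * lmax / (α * lmin)) := by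
  rcases isEmpty_or_nonempty (Fin nx ⊕ Fin nu) with hE | hE
  · have hz0 : ∀ t : ℝ, ‖z t‖ = (0 : ℝ) := by
      intro t
      have : z t = 0 := Subsingleton.elim _ _
      rw [this, norm_zero]
    simp only [hz0]
    rw [Filter.limsup_const]
    exact mul_nonneg hkb (Real.sqrt_nonneg _)
  · have hmin : ∀ i, lmin ≤ hP.1.eigenvalues i := fun i =>
      hlmin ▸ ciInf_le (Finite.bddBelow_range _) i
    have hmax : ∀ i, hP.1.eigenvalues i ≤ lmax := fun i =>
      hlmax ▸ le_ciSup (Finite.bddAbove_range _) i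
    have hlmin0 : 0 < lmin := by
      obtain ⟨i, hi⟩ := exists_eq_ciInf_of_finite (f := hP.1.eigenvalues)
      rw [hlmin, ← hi]
      exact hP.eigenvalues_pos i
    have hlmax0 : 0 < lmax :=
      lt_of_lt_of_le hlmin0 (le_trans (hmin (Classical.arbitrary _)) (hmax _))
    have hPt : Pᵀ = P := by
      rw [← conjTranspose_eq_transpose_of_trivial]; exact hP.1
    set K : ℝ := -(α / lmax) with hK
    set ε : ℝ := ζ * kb ^ 2 with hε
    set V : ℝ → ℝ := fun s => (z s : (Fin nx ⊕ Fin nu) → ℝ) ⬝ᵥ P.mulVec (z s) with hVdef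
    set W : ℝ → ℝ := fun s =>
      (z s : (Fin nx ⊕ Fin nu) → ℝ) ⬝ᵥ P.mulVec (Acl.mulVec (z s) + Jᵀ.mulVec (g s))
        + ((Acl.mulVec (z s) + Jᵀ.mulVec (g s)) : (Fin nx ⊕ Fin nu) → ℝ) ⬝ᵥ P.mulVec (z s)
      with hWdef
    have hW : ∀ t, 0 ≤ t → HasDerivAt V (W t) t := fun t ht =>
      my_hasDerivAt_quad P z _ t (hz t ht)
    -- pointwise differential inequality
    have hWb : ∀ t, 0 ≤ t → W t ≤ K * V t + ε := by
      intro t ht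
      set x : (Fin nx ⊕ Fin nu) → ℝ := (z t : (Fin nx ⊕ Fin nu) → ℝ) with hx
      set gg : Fin nx → ℝ := (g t : Fin nx → ℝ) with hgg
      have hgt : gg ⬝ᵥ gg ≤ kb ^ 2 := by
        have hnorm : ‖g t‖ ^ 2 = gg ⬝ᵥ gg := by
          rw [EuclideanSpace.norm_eq, Real.sq_sqrt (Finset.sum_nonneg fun i _ => sq_nonneg _)]
          simp [dotProduct, Real.norm_eq_abs, sq_abs, sq]
          rfl
        rw [← hnorm]
        exact pow_le_pow_left₀ (norm_nonneg _) (hg t ht) 2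
      have h2 : x ⬝ᵥ (P.mulVec (Jᵀ.mulVec gg)) = ((J * P).mulVec x) ⬝ᵥ gg := by
        rw [mulVec_mulVec, dotProduct_mulVec, my_vecMul_eq, transpose_mul,
          transpose_transpose, hPt]
      have h3 : (Acl.mulVec x) ⬝ᵥ (P.mulVec x) = x ⬝ᵥ ((P * Acl)ᵀ.mulVec x) := by
        rw [dotProduct_mulVec, vecMul_mulVec, ← dotProduct_mulVec, transpose_mul, hPt]
      have h4 : (Jᵀ.mulVec gg) ⬝ᵥ (P.mulVec x) = ((J * P).mulVec x) ⬝ᵥ gg := by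
        rw [dotProduct_mulVec, vecMul_mulVec, transpose_transpose, ← dotProduct_mulVec,
          dotProduct_comm]
      have h1 : x ⬝ᵥ (P.mulVec (Acl.mulVec x)) = x ⬝ᵥ ((P * Acl).mulVec x) := by
        rw [mulVec_mulVec]
      have hWt : W t = x ⬝ᵥ ((P * Acl).mulVec x) + x ⬝ᵥ ((P * Acl)ᵀ.mulVec x)
          + 2 * (((J * P).mulVec x) ⬝ᵥ gg) := by
        show x ⬝ᵥ P.mulVec (Acl.mulVec x + Jᵀ.mulVec gg)
            + ((Acl.mulVec x + Jᵀ.mulVec gg) : (Fin nx ⊕ Fin nu) → ℝ) ⬝ᵥ P.mulVec x = _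
        rw [mulVec_add, dotProduct_add, add_dotProduct, h1, h2, h3, h4]
        ring
      have hsq : 2 * (((J * P).mulVec x) ⬝ᵥ gg)
          ≤ ζ⁻¹ * (((J * P).mulVec x) ⬝ᵥ ((J * P).mulVec x)) + ζ * (gg ⬝ᵥ gg) :=
        my_cauchy _ _ hζ
      have hww : ((J * P).mulVec x) ⬝ᵥ ((J * P).mulVec x)
          = x ⬝ᵥ ((P * Jᵀ * J * P).mulVec x) := by
        rw [dotProduct_mulVec, vecMul_mulVec, ← dotProduct_mulVec, transpose_mul, hPt,
          ← Matrix.mul_assoc]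
      rw [hww] at hsq
      have hLo : x ⬝ᵥ ((P * Acl).mulVec x) + x ⬝ᵥ ((P * Acl)ᵀ.mulVec x)
          + ζ⁻¹ * (x ⬝ᵥ ((P * Jᵀ * J * P).mulVec x)) ≤ -α * (x ⬝ᵥ x) := by
        have h0 := hLoewner.dotProduct_mulVec_nonneg x
        simp only [star_trivial, sub_mulVec, add_mulVec, smul_mulVec, one_mulVec,
          dotProduct_sub, dotProduct_add, dotProduct_smul, smul_eq_mul, neg_mul,
          neg_smul, neg_mulVec, dotProduct_neg] at h0
        linarith
      have hVt : V t = x ⬝ᵥ P.mulVec x := rfl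
      have hquad : x ⬝ᵥ P.mulVec x ≤ lmax * (x ⬝ᵥ x) := my_quad_ub hP.1 hmax x
      have h5 : -α * (x ⬝ᵥ x) ≤ K * V t := by
        rw [hVt, hK]
        have h6 : (α / lmax) * (x ⬝ᵥ P.mulVec x) ≤ (α / lmax) * (lmax * (x ⬝ᵥ x)) :=
          mul_le_mul_of_nonneg_left hquad (div_pos hα hlmax0).le
        have h7 : (α / lmax) * (lmax * (x ⬝ᵥ x)) = α * (x ⬝ᵥ x) := by
          rw [← mul_assoc, div_mul_cancel₀ _ hlmax0.ne']
        nlinarith [h6, h7]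
      have hζg : ζ * (gg ⬝ᵥ gg) ≤ ζ * kb ^ 2 := mul_le_mul_of_nonneg_left hgt hζ.le
      rw [hWt, hε]
      linarith
    -- Grönwall
    have hVb : ∀ t, 0 ≤ t → V t ≤ gronwallBound (V 0) K ε t := by
      intro t ht
      have hcont : ContinuousOn V (Set.Icc 0 t) := fun y hy =>
        ((hW y hy.1).continuousAt).continuousWithinAt
      have hslope : ∀ y ∈ Set.Ico (0 : ℝ) t, ∀ r, W y < r →
          ∃ᶠ u in nhdsWithin y (Set.Ioi y), (u - y)⁻¹ * (V u - V y) < r := by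
        intro y hy r hr
        have hd : Filter.Tendsto (slope V y) (nhdsWithin y {y}ᶜ) (nhds (W y)) :=
          hasDerivAt_iff_tendsto_slope.mp (hW y hy.1)
        have hd2 : Filter.Tendsto (slope V y) (nhdsWithin y (Set.Ioi y)) (nhds (W y)) :=
          hd.mono_left (nhdsWithin_mono y fun u hu =>
            Set.mem_compl_singleton_iff.mpr (ne_of_gt hu))
        have hev : ∀ᶠ u in nhdsWithin y (Set.Ioi y), slope V y u < r :=
          hd2.eventually (Filter.Tendsto.eventually_lt_const hr Filter.tendsto_id)
        refine hev.frequently.mono fun u hu => ?_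
        rwa [slope_def_field, div_eq_inv_mul] at hu
      have := le_gronwallBound_of_liminf_deriv_right_le (f := V) (f' := W)
        (δ := V 0) (K := K) (ε := ε) (a := 0) (b := t) hcont hslope le_rfl
        (fun y hy => hWb y hy.1) t ⟨ht, le_rfl⟩
      simpa using this
    -- limit of the bound
    have hKneg : K < 0 := by
      rw [hK]; exact neg_neg_iff_pos.mpr (div_pos hα hlmax0)
    have hexp : Filter.Tendsto (fun s : ℝ => Real.exp (K * s)) Filter.atTop (nhds 0) := by
      have h1 : Filter.Tendsto (fun s : ℝ => (α / lmax) * s) Filter.atTop Filter.atTop :=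
        Filter.Tendsto.const_mul_atTop (div_pos hα hlmax0) Filter.tendsto_id
      have h2 : Filter.Tendsto (fun s : ℝ => K * s) Filter.atTop Filter.atBot := by
        have h3 := Filter.tendsto_neg_atTop_atBot.comp h1
        have he : (fun s : ℝ => K * s) = fun s : ℝ => -((α / lmax) * s) := by
          funext s; rw [hK]; ring
        rw [he]; exact h3
      exact Real.tendsto_exp_atBot.comp h2
    have hB : Filter.Tendsto (fun s => gronwallBound (V 0) K ε s) Filter.atTop
        (nhds (ε * lmax / α)) := by
      rw [gronwallBound_of_K_ne_0 hKneg.ne]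
      have hlim : Filter.Tendsto
          (fun s => V 0 * Real.exp (K * s) + ε / K * (Real.exp (K * s) - 1))
          Filter.atTop (nhds (V 0 * 0 + ε / K * (0 - 1))) :=
        (tendsto_const_nhds.mul hexp).add
          (tendsto_const_nhds.mul (hexp.sub tendsto_const_nhds))
      have hval : V 0 * 0 + ε / K * (0 - 1) = ε * lmax / α := by
        rw [hK]; field_simp; ring
      rw [← hval]; exact hlim
    have hS : Filter.Tendsto (fun s => Real.sqrt (gronwallBound (V 0) K ε s / lmin))
        Filter.atTop (nhds (kb * Real.sqrt (ζ * lmax / (α * lmin)))) := by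
      have hq : ε * lmax / α / lmin = kb ^ 2 * (ζ * lmax / (α * lmin)) := by
        rw [hε]; field_simp
      have h1 := (hB.div_const lmin).sqrt
      rw [hq, Real.sqrt_mul (sq_nonneg kb), Real.sqrt_sq hkb] at h1
      exact h1
    -- eventual bound on ‖z t‖
    have hub : ∀ᶠ t in Filter.atTop,
        ‖z t‖ ≤ Real.sqrt (gronwallBound (V 0) K ε t / lmin) := by
      filter_upwards [Filter.eventually_ge_atTop (0 : ℝ)] with t ht
      have h1 : lmin * ((z t : (Fin nx ⊕ Fin nu) → ℝ) ⬝ᵥ (z t : (Fin nx ⊕ Fin nu) → ℝ))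
          ≤ V t := my_quad_lb hP.1 hmin _
      have h2 : V t ≤ gronwallBound (V 0) K ε t := hVb t ht
      have h3 : (z t : (Fin nx ⊕ Fin nu) → ℝ) ⬝ᵥ (z t : (Fin nx ⊕ Fin nu) → ℝ)
          ≤ gronwallBound (V 0) K ε t / lmin := by
        rw [le_div_iff₀ hlmin0]
        linarith [mul_comm lmin ((z t : (Fin nx ⊕ Fin nu) → ℝ) ⬝ᵥ (z t : (Fin nx ⊕ Fin nu) → ℝ))]
      have h4 : ‖z t‖ = Real.sqrt
          ((z t : (Fin nx ⊕ Fin nu) → ℝ) ⬝ᵥ (z t : (Fin nx ⊕ Fin nu) → ℝ)) := by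
        rw [EuclideanSpace.norm_eq]
        congr 1
        simp [dotProduct, Real.norm_eq_abs, sq_abs, sq]
      rw [h4]
      exact Real.sqrt_le_sqrt h3
    have hbdd : Filter.IsBoundedUnder (· ≤ ·) Filter.atTop
        (fun s => Real.sqrt (gronwallBound (V 0) K ε s / lmin)) :=
      hS.isBoundedUnder_le
    have hcb : Filter.IsCoboundedUnder (· ≤ ·) Filter.atTop (fun t => ‖z t‖) :=
      Filter.isCoboundedUnder_le_of_le Filter.atTop (x := 0) fun t => norm_nonneg _
    calc Filter.limsup (fun t => ‖z t‖) Filter.atTop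
        ≤ Filter.limsup (fun s => Real.sqrt (gronwallBound (V 0) K ε s / lmin))
            Filter.atTop := Filter.limsup_le_limsup hub hcb hbdd
      _ = kb * Real.sqrt (ζ * lmax / (α * lmin)) := hS.limsup_eq
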